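/- Let X be a completely regular Hausdorff space and A ⊆ X a closed set. The following are equivalent: (a) A equals the closure of its interior; (b) whenever f_α ↗ f in C(X), then f_α|_A ↗ f|_A in C(A). -/

import Mathlib

universe u

open Set unitInterval

/-- Density lemma: if `f` is the LUB of the net `f_` in `C(X, ℝ)`, then on every nonempty
open set some `f_ i` comes within `ε` of `f` somewhere. -/
lemma stmt5_dense_approx {X : Type u} [TopologicalSpace X] [CompletelyRegularSpace X]
    {ι : Type u} (f_ : ι → C(X, ℝ)) (f : C(X, ℝ))
    (hlub : IsLUB (Set.range f_) f) {U : Set X} (hU : IsOpen U) {x0 : X} (hx0 : x0 ∈ U)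
    {ε : ℝ} (hε : 0 < ε) : ∃ y ∈ U, ∃ i, f y - ε < f_ i y := by
  by_contra hcon
  push_neg at hcon
  obtain ⟨φ, hφc, hφx, hφK⟩ :=
    CompletelyRegularSpace.completely_regular x0 Uᶜ hU.isClosed_compl (by simpa)
  let h : C(X, ℝ) := ⟨fun y => f y - ε * (1 - (φ y : ℝ)),
    (map_continuous f).sub (continuous_const.mul (continuous_const.sub
      (continuous_subtype_val.comp hφc)))⟩
  have hub : h ∈ upperBounds (Set.range f_) := by
    rintro _ ⟨i, rfl⟩
    rw [ContinuousMap.le_def]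
    intro y
    show f_ i y ≤ f y - ε * (1 - (φ y : ℝ))
    by_cases hy : y ∈ U
    · have h1 : f_ i y ≤ f y - ε := hcon y hy i
      have h2 : ε * (1 - (φ y : ℝ)) ≤ ε := by
        nlinarith [(φ y).2.1, (φ y).2.2]
      linarith
    · have h1 : φ y = 1 := hφK hy
      have h2 : f_ i y ≤ f y := hlub.1 ⟨i, rfl⟩ y
      rw [h1]
      norm_num
      exact h2
  have hle : f ≤ h := hlub.2 hub
  have := hle x0
  simp only [h, ContinuousMap.coe_mk, hφx] at this
  norm_num at this
  linarith

theorem stmt5 {X : Type u} [TopologicalSpace X] [CompletelyRegularSpace X] [T2Space X]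
    (A : Set X) (hA : IsClosed A) :
    A = closure (interior A) ↔
      ∀ (ι : Type u) [Preorder ι] [IsDirected ι (· ≤ ·)] (f_ : ι → C(X, ℝ)) (f : C(X, ℝ)),
        Monotone f_ → IsLUB (Set.range f_) f →
          IsLUB (Set.range fun i => (f_ i).restrict A) (f.restrict A) := by
  constructor
  · -- forward direction
    intro hA' ι _ _ f_ f hmono hlub
    constructor
    · rintro _ ⟨i, rfl⟩
      rw [ContinuousMap.le_def]
      intro p
      simp only [ContinuousMap.restrict_apply]
      exact hlub.1 ⟨i, rfl⟩ p.1
    · intro g hg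
      -- first: on interior A, f ≤ g
      have key : ∀ x (hx : x ∈ interior A), f x ≤ g ⟨x, interior_subset hx⟩ := by
        intro x hx
        by_contra hlt
        push_neg at hlt
        set ε : ℝ := (f x - g ⟨x, interior_subset hx⟩) / 3 with hεdef
        have hε : 0 < ε := by simp only [hεdef]; linarith
        -- open set in X corresponding to {p : A | g p < g x + ε}
        have hWopen : IsOpen {p : ↥A | g p < g ⟨x, interior_subset hx⟩ + ε} := by
          exact isOpen_lt (map_continuous g) continuous_const
        rw [isOpen_induced_iff] at hWopen
        obtain ⟨V, hVopen, hVeq⟩ := hWopen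
        set U : Set X := interior A ∩ V ∩ f ⁻¹' (Set.Ioi (f x - ε)) with hUdef
        have hUopen : IsOpen U :=
          ((isOpen_interior.inter hVopen).inter ((map_continuous f).isOpen_preimage _ isOpen_Ioi))
        have hxU : x ∈ U := by
          refine ⟨⟨hx, ?_⟩, by simp [hε]⟩
          have : (⟨x, interior_subset hx⟩ : ↥A) ∈
              {p : ↥A | g p < g ⟨x, interior_subset hx⟩ + ε} := by
            simp [hε]
          rw [← hVeq] at this
          exact this
        obtain ⟨y, hyU, i, hyi⟩ := stmt5_dense_approx f_ f hlub hUopen hxU hε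
        have hyA : y ∈ A := interior_subset hyU.1.1
        have h1 : f_ i y ≤ g ⟨y, hyA⟩ := by
          have := hg ⟨i, rfl⟩ ⟨y, hyA⟩
          simpa using this
        have h2 : (⟨y, hyA⟩ : ↥A) ∈ {p : ↥A | g p < g ⟨x, interior_subset hx⟩ + ε} := by
          rw [← hVeq]
          exact hyU.1.2
        have h3 : f x - ε < f y := hyU.2
        simp only [Set.mem_setOf_eq] at h2
        have : f x - g ⟨x, interior_subset hx⟩ = 3 * ε := by rw [hεdef]; ring
        linarith
      -- then: extend to all of A by density
      rw [ContinuousMap.le_def]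
      have hclosed : IsClosed {p : ↥A | f.restrict A p ≤ g p} :=
        isClosed_le (map_continuous (f.restrict A)) (map_continuous g)
      have hsub : ((↑) : ↥A → X) ⁻¹' (interior A) ⊆ {p : ↥A | f.restrict A p ≤ g p} := by
        rintro ⟨y, hy⟩ hmem
        simp only [Set.mem_preimage] at hmem
        simpa using key y hmem
      intro p
      have hp : p ∈ closure (((↑) : ↥A → X) ⁻¹' (interior A)) := by
        rw [closure_subtype]
        have himg : ((↑) : ↥A → X) '' (((↑) : ↥A → X) ⁻¹' (interior A)) = interior A := by
          rw [Subtype.image_preimage_coe]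
          exact Set.inter_eq_self_of_subset_right interior_subset
        rw [himg, ← hA']
        exact p.2
      exact hclosed.closure_subset_iff.mpr hsub hp
  · -- backward direction
    intro H
    refine le_antisymm ?_ (by
      calc closure (interior A) ⊆ closure A := closure_mono interior_subset
        _ = A := hA.closure_eq)
    intro a ha
    by_contra hna
    -- separating function for a and B := closure (interior A)
    obtain ⟨χ, hχc, hχa, hχB⟩ :=
      CompletelyRegularSpace.completely_regular a (closure (interior A)) isClosed_closure hna
    set c : C(X, ℝ) := ⟨fun y => (χ y : ℝ), continuous_subtype_val.comp hχc⟩ with hcdef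
    set F : Set C(X, ℝ) := {u | u ≤ 1 ∧ ∀ y ∈ A, u y ≤ c y} with hFdef
    haveI : IsDirected ↥F (· ≤ ·) := by
      constructor
      rintro ⟨i, hi1, hi2⟩ ⟨j, hj1, hj2⟩
      refine ⟨⟨i ⊔ j, sup_le hi1 hj1, fun y hy => ?_⟩, ?_, ?_⟩
      · simp only [ContinuousMap.sup_apply]
        exact sup_le (hi2 y hy) (hj2 y hy)
      · show i ≤ i ⊔ j
        exact le_sup_left
      · show j ≤ i ⊔ j
        exact le_sup_right
    have hlub : IsLUB (Set.range (Subtype.val : ↥F → C(X, ℝ))) 1 := by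
      constructor
      · rintro _ ⟨i, rfl⟩
        exact i.2.1
      · intro h hh
        rw [ContinuousMap.le_def]
        have hSclosed : IsClosed {x | (1 : ℝ) ≤ h x} :=
          isClosed_le continuous_const (map_continuous h)
        have hD1 : Aᶜ ⊆ {x | (1 : ℝ) ≤ h x} := by
          intro x hxA
          obtain ⟨v, hvc, hvx, hvA⟩ :=
            CompletelyRegularSpace.completely_regular x A hA hxA
          set u : C(X, ℝ) := ⟨fun y => 1 - (v y : ℝ),
            continuous_const.sub (continuous_subtype_val.comp hvc)⟩ with hudef
          have huF : u ∈ F := by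
            constructor
            · rw [ContinuousMap.le_def]
              intro y
              have := (v y).2.1
              show 1 - (v y : ℝ) ≤ 1
              linarith
            · intro y hy
              have h1 : v y = 1 := hvA hy
              have h2 : (0 : ℝ) ≤ χ y := (χ y).2.1
              show 1 - (v y : ℝ) ≤ c y
              rw [h1]
              simpa using (show (0 : ℝ) ≤ c y from h2)
          have := hh ⟨⟨u, huF⟩, rfl⟩ x
          simp only [hudef, ContinuousMap.coe_mk, hvx] at this
          simp only [Set.mem_setOf_eq]
          simpa using this
        have hD2 : interior A ⊆ {x | (1 : ℝ) ≤ h x} := by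
          intro x hxA
          have hxc : x ∉ (interior A)ᶜ := by simpa using hxA
          obtain ⟨v, hvc, hvx, hvA⟩ :=
            CompletelyRegularSpace.completely_regular x (interior A)ᶜ
              isOpen_interior.isClosed_compl hxc
          set u : C(X, ℝ) := ⟨fun y => 1 - (v y : ℝ),
            continuous_const.sub (continuous_subtype_val.comp hvc)⟩ with hudef
          have huF : u ∈ F := by
            constructor
            · rw [ContinuousMap.le_def]
              intro y
              have := (v y).2.1
              show 1 - (v y : ℝ) ≤ 1
              linarith
            · intro y hy
              show 1 - (v y : ℝ) ≤ c y
              by_cases hyi : y ∈ interior A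
              · have h1 : χ y = 1 := hχB (subset_closure hyi)
                have h2 : (0 : ℝ) ≤ v y := (v y).2.1
                show 1 - (v y : ℝ) ≤ χ y
                rw [h1]
                simpa using h2
              · have h1 : v y = 1 := hvA (by simpa using hyi)
                have h2 : (0 : ℝ) ≤ χ y := (χ y).2.1
                show 1 - (v y : ℝ) ≤ χ y
                rw [h1]
                simpa using h2
          have := hh ⟨⟨u, huF⟩, rfl⟩ x
          simp only [hudef, ContinuousMap.coe_mk, hvx] at this
          simp only [Set.mem_setOf_eq]
          simpa using this
        have hdense : closure (Aᶜ ∪ interior A) = Set.univ := by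
          rw [← Set.compl_empty_iff, ← interior_compl]
          have hcompl : (Aᶜ ∪ interior A)ᶜ = A ∩ (interior A)ᶜ := by
            rw [Set.compl_union, compl_compl]
          rw [hcompl]
          by_contra hne
          obtain ⟨z, hz⟩ := Set.nonempty_iff_ne_empty.mpr hne
          have hz1 : z ∈ interior A := by
            apply interior_mono (Set.inter_subset_left) at hz
            exact hz
          have hz2 : z ∈ A ∩ (interior A)ᶜ := interior_subset hz
          exact hz2.2 hz1
        intro x
        have hx : x ∈ closure (Aᶜ ∪ interior A) := by rw [hdense]; trivial
        have : x ∈ {x | (1 : ℝ) ≤ h x} :=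
          hSclosed.closure_subset_iff.mpr (Set.union_subset hD1 hD2) hx
        simpa using this
    have hmono : Monotone (Subtype.val : ↥F → C(X, ℝ)) := fun _ _ h => h
    have hres := H ↥F Subtype.val 1 hmono hlub
    have hg : (c.restrict A) ∈ upperBounds
        (Set.range fun i : ↥F => ((i : C(X, ℝ)).restrict A)) := by
      rintro _ ⟨i, rfl⟩
      rw [ContinuousMap.le_def]
      intro p
      simp only [ContinuousMap.restrict_apply]
      exact i.2.2 p.1 p.2
    have hle := hres.2 hg ⟨a, ha⟩
    have hfin : (1 : ℝ) ≤ (χ a : ℝ) := by simpa [hcdef] using hle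
    rw [hχa] at hfin
    norm_num at hfin
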